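/- Let A ∈ GLₙ(ℤ), and let X, Y, X', Y' be real symmetric n×n matrices with Y, Y' positive definite. Let U be a real n×n matrix with ᵗA U symmetric, and suppose the invariance relations A(XY⁻¹) = (X'Y'⁻¹)A − (Y'+X'Y'⁻¹X')U and A(Y+XY⁻¹X) = (Y'+X'Y'⁻¹X') ᵗA⁻¹ hold. Then, writing Ω = (Y+XY⁻¹X)⁻¹(X+iY)Y⁻¹ and Ω' = (Y'+X'Y'⁻¹X')⁻¹(X'+iY')Y'⁻¹, one has ᵗA Ω' = Ω A⁻¹ + ᵗU. -/

import Mathlib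

open Matrix Complex

/-- A ring hom commutes with nonsingular inverse. -/
lemma map_nonsing_inv' {n : ℕ} (f : ℝ →+* ℂ) (M : Matrix (Fin n) (Fin n) ℝ)
    (hM : IsUnit M.det) : (M.map f)⁻¹ = M⁻¹.map f := by
  apply Matrix.inv_eq_left_inv
  rw [← Matrix.map_mul, Matrix.nonsing_inv_mul M hM, Matrix.map_one f f.map_zero f.map_one]

/-- The Γ-equivariance relation `ᵗA Ω' = Ω A⁻¹ + ᵗU` for `Ω = (Y+XY⁻¹X)⁻¹(X+iY)Y⁻¹`. -/
theorem omega_equivariance (n : ℕ) (A : Matrix (Fin n) (Fin n) ℤ) (hA : IsUnit A.det)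
    (X Y X' Y' : Matrix (Fin n) (Fin n) ℝ)
    (hX : X.IsSymm) (hY : Y.IsSymm) (hYpd : Y.PosDef)
    (hX' : X'.IsSymm) (hY' : Y'.IsSymm) (hY'pd : Y'.PosDef)
    (U : Matrix (Fin n) (Fin n) ℝ)
    (hU : ((A.map (Int.cast : ℤ → ℝ))ᵀ * U).IsSymm)
    (h1 : A.map (Int.cast : ℤ → ℝ) * (X * Y⁻¹)
      = X' * Y'⁻¹ * A.map (Int.cast : ℤ → ℝ) - (Y' + X' * Y'⁻¹ * X') * U)
    (h2 : A.map (Int.cast : ℤ → ℝ) * (Y + X * Y⁻¹ * X)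
      = (Y' + X' * Y'⁻¹ * X') * ((A.map (Int.cast : ℤ → ℝ))ᵀ)⁻¹) :
    (A.map (Int.cast : ℤ → ℂ))ᵀ *
        ((Y'.map Complex.ofReal + X'.map Complex.ofReal * (Y'.map Complex.ofReal)⁻¹ * X'.map Complex.ofReal)⁻¹
          * (X'.map Complex.ofReal + Complex.I • Y'.map Complex.ofReal) * (Y'.map Complex.ofReal)⁻¹)
      = ((Y.map Complex.ofReal + X.map Complex.ofReal * (Y.map Complex.ofReal)⁻¹ * X.map Complex.ofReal)⁻¹
          * (X.map Complex.ofReal + Complex.I • Y.map Complex.ofReal) * (Y.map Complex.ofReal)⁻¹)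
        * (A.map (Int.cast : ℤ → ℂ))⁻¹
      + (U.map Complex.ofReal)ᵀ := by
  classical
  set f : ℝ →+* ℂ := Complex.ofRealHom with hf
  have hcoe : (Complex.ofReal : ℝ → ℂ) = ⇑f := rfl
  rw [hcoe]
  -- real matrices
  set B : Matrix (Fin n) (Fin n) ℝ := A.map (Int.cast : ℤ → ℝ) with hB
  set T : Matrix (Fin n) (Fin n) ℝ := Y + X * Y⁻¹ * X with hT
  set T' : Matrix (Fin n) (Fin n) ℝ := Y' + X' * Y'⁻¹ * X' with hT'
  -- positive definiteness of T, T'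
  have hTpd : T.PosDef := by
    refine hYpd.add_posSemidef ?_
    have := (hYpd.inv).posSemidef.conjTranspose_mul_mul_same X
    simpa [Matrix.conjTranspose_eq_transpose_of_trivial, hX.eq] using this
  have hT'pd : T'.PosDef := by
    refine hY'pd.add_posSemidef ?_
    have := (hY'pd.inv).posSemidef.conjTranspose_mul_mul_same X'
    simpa [Matrix.conjTranspose_eq_transpose_of_trivial, hX'.eq] using this
  -- units of determinants (real)
  have hBdet : IsUnit B.det := by
    have h : B.det = (Int.cast : ℤ → ℝ) A.det := ((Int.castRingHom ℝ).map_det A).symm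
    rw [h]
    exact hA.map (Int.castRingHom ℝ)
  have hYdet : IsUnit Y.det := hYpd.det_pos.ne'.isUnit
  have hY'det : IsUnit Y'.det := hY'pd.det_pos.ne'.isUnit
  have hTdet : IsUnit T.det := hTpd.det_pos.ne'.isUnit
  have hT'det : IsUnit T'.det := hT'pd.det_pos.ne'.isUnit
  -- complex matrices
  set Bc := B.map ⇑f with hBc
  set Xc := X.map ⇑f with hXc
  set Yc := Y.map ⇑f with hYc
  set X'c := X'.map ⇑f with hX'c
  set Y'c := Y'.map ⇑f with hY'c
  set Tc := T.map ⇑f with hTc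
  set T'c := T'.map ⇑f with hT'c
  set Uc := U.map ⇑f with hUc
  have mapadd : ∀ M N : Matrix (Fin n) (Fin n) ℝ, (M + N).map ⇑f = M.map ⇑f + N.map ⇑f :=
    fun M N => Matrix.map_add f f.map_add M N
  have mapsub : ∀ M N : Matrix (Fin n) (Fin n) ℝ, (M - N).map ⇑f = M.map ⇑f - N.map ⇑f :=
    fun M N => Matrix.map_sub f f.map_sub M N
  have mapmul : ∀ M N : Matrix (Fin n) (Fin n) ℝ, (M * N).map ⇑f = M.map ⇑f * N.map ⇑f :=
    fun M N => Matrix.map_mul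
  have mapinv : ∀ M : Matrix (Fin n) (Fin n) ℝ, IsUnit M.det → (M.map ⇑f)⁻¹ = M⁻¹.map ⇑f :=
    fun M h => map_nonsing_inv' f M h
  -- complex dets
  have detmap : ∀ M : Matrix (Fin n) (Fin n) ℝ, IsUnit M.det → IsUnit (M.map ⇑f).det := by
    intro M h
    have h2 : (M.map ⇑f).det = f M.det := (f.map_det M).symm
    rw [h2]
    exact h.map f
  have hBcdet : IsUnit Bc.det := detmap B hBdet
  have hYcdet : IsUnit Yc.det := detmap Y hYdet
  have hY'cdet : IsUnit Y'c.det := detmap Y' hY'det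
  have hTcdet : IsUnit Tc.det := detmap T hTdet
  have hT'cdet : IsUnit T'c.det := detmap T' hT'det
  have hBcTdet : IsUnit (Bcᵀ).det := by rwa [Matrix.det_transpose]
  -- identify the integer-cast matrix over ℂ
  have hAc : A.map (Int.cast : ℤ → ℂ) = Bc := by
    rw [hBc, hB, Matrix.map_map]
    ext i j
    simp [hf, Function.comp]
  have hTceq : Tc = Yc + Xc * Yc⁻¹ * Xc := by
    rw [hTc, hT, mapadd, mapmul, mapmul, mapinv Y hYdet]
  have hT'ceq : T'c = Y'c + X'c * Y'c⁻¹ * X'c := by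
    rw [hT'c, hT', mapadd, mapmul, mapmul, mapinv Y' hY'det]
  -- complex versions of the hypotheses
  have h1c : Bc * (Xc * Yc⁻¹) = X'c * Y'c⁻¹ * Bc - T'c * Uc := by
    rw [hBc, hXc, hYc, hX'c, hY'c, hT'c, hUc, mapinv Y hYdet, mapinv Y' hY'det]
    simp only [← mapmul, ← mapsub]
    exact congrArg (fun M => M.map ⇑f) h1
  have h2c : Bc * Tc = T'c * (Bcᵀ)⁻¹ := by
    rw [hBc, hTc, hT'c, ← Matrix.transpose_map, mapinv Bᵀ (by rwa [Matrix.det_transpose])]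
    simp only [← mapmul]
    exact congrArg (fun M => M.map ⇑f) h2
  -- key identity E2 : Bcᵀ * T'c⁻¹ = Tc⁻¹ * Bc⁻¹
  have h3 : T'c = Bc * Tc * Bcᵀ := by
    rw [h2c, Matrix.mul_assoc, Matrix.nonsing_inv_mul Bcᵀ hBcTdet, Matrix.mul_one]
  have E2 : Bcᵀ * T'c⁻¹ = Tc⁻¹ * Bc⁻¹ := by
    rw [h3, Matrix.mul_inv_rev, Matrix.mul_inv_rev, ← Matrix.mul_assoc,
      Matrix.mul_nonsing_inv Bcᵀ hBcTdet, Matrix.one_mul]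
  -- E3 : Tc⁻¹ * Bc⁻¹ * T'c = Bcᵀ
  have E3 : Tc⁻¹ * Bc⁻¹ * T'c = Bcᵀ := by
    rw [← E2, Matrix.mul_assoc, Matrix.nonsing_inv_mul T'c hT'cdet, Matrix.mul_one]
  -- symmetry of ᵗB U over ℂ : Ucᵀ * Bc = Bcᵀ * Uc
  have hUsymm : Ucᵀ * Bc = Bcᵀ * Uc := by
    have h := hU
    rw [Matrix.IsSymm, Matrix.transpose_mul, Matrix.transpose_transpose] at h
    rw [hUc, hBc, ← Matrix.transpose_map, ← Matrix.transpose_map]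
    simp only [← mapmul]
    exact congrArg (fun M => M.map ⇑f) h
  -- real part identity
  have Ereal : Bcᵀ * (T'c⁻¹ * X'c * Y'c⁻¹) = Tc⁻¹ * Xc * Yc⁻¹ * Bc⁻¹ + Ucᵀ := by
    have hkey : X'c * Y'c⁻¹ * Bc = Bc * Xc * Yc⁻¹ + T'c * Uc := by
      rw [Matrix.mul_assoc Bc Xc Yc⁻¹]
      exact (eq_sub_iff_add_eq.mp h1c).symm
    have hXY' : X'c * Y'c⁻¹ = (Bc * Xc * Yc⁻¹ + T'c * Uc) * Bc⁻¹ := by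
      calc X'c * Y'c⁻¹ = X'c * Y'c⁻¹ * Bc * Bc⁻¹ :=
            (Matrix.mul_nonsing_inv_cancel_right Bc _ hBcdet).symm
        _ = (Bc * Xc * Yc⁻¹ + T'c * Uc) * Bc⁻¹ := by rw [hkey]
    calc Bcᵀ * (T'c⁻¹ * X'c * Y'c⁻¹)
        = (Bcᵀ * T'c⁻¹) * (X'c * Y'c⁻¹) := by noncomm_ring
      _ = Tc⁻¹ * Bc⁻¹ * ((Bc * Xc * Yc⁻¹ + T'c * Uc) * Bc⁻¹) := by rw [E2, hXY']
      _ = Tc⁻¹ * (Bc⁻¹ * Bc) * Xc * Yc⁻¹ * Bc⁻¹ + (Tc⁻¹ * Bc⁻¹ * T'c) * Uc * Bc⁻¹ := by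
            noncomm_ring
      _ = Tc⁻¹ * Xc * Yc⁻¹ * Bc⁻¹ + Bcᵀ * Uc * Bc⁻¹ := by
            rw [Matrix.nonsing_inv_mul Bc hBcdet, Matrix.mul_one, E3]
      _ = Tc⁻¹ * Xc * Yc⁻¹ * Bc⁻¹ + Ucᵀ := by
            rw [← hUsymm, Matrix.mul_nonsing_inv_cancel_right Bc Ucᵀ hBcdet]
  -- assemble
  rw [hAc, ← hTceq, ← hT'ceq]
  have lhs : Bcᵀ * (T'c⁻¹ * (X'c + Complex.I • Y'c) * Y'c⁻¹)
      = Bcᵀ * (T'c⁻¹ * X'c * Y'c⁻¹) + Complex.I • (Bcᵀ * T'c⁻¹) := by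
    rw [Matrix.mul_add, mul_smul_comm, Matrix.add_mul, smul_mul_assoc,
      Matrix.mul_assoc T'c⁻¹ Y'c Y'c⁻¹, Matrix.mul_nonsing_inv Y'c hY'cdet, Matrix.mul_one,
      Matrix.mul_add, mul_smul_comm]
  have rhs : Tc⁻¹ * (Xc + Complex.I • Yc) * Yc⁻¹ * Bc⁻¹
      = Tc⁻¹ * Xc * Yc⁻¹ * Bc⁻¹ + Complex.I • (Tc⁻¹ * Bc⁻¹) := by
    rw [Matrix.mul_add, mul_smul_comm, Matrix.add_mul, smul_mul_assoc,
      Matrix.mul_assoc Tc⁻¹ Yc Yc⁻¹, Matrix.mul_nonsing_inv Yc hYcdet, Matrix.mul_one,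
      Matrix.add_mul, smul_mul_assoc]
  rw [lhs, rhs, Ereal, E2]
  abel
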